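/- Let θi(u1,u2,u3) for i=1,2,3 denote the inner angles of the triangle formed by three mutually externally tangent circles of radii e^{u1}, e^{u2}, e^{u3}. Then for i ≠ j, ∂θi/∂uj = ∂θj/∂ui (symmetry of the Jacobian of the angle map). -/

import Mathlib

open Real

/-- Inner angle at the vertex of radius `a` in the triangle with side lengths
`a+b, a+c, b+c` formed by three mutually externally tangent circles. -/
noncomputable def ang (a b c : ℝ) : ℝ :=
  Real.arccos (((a + b) ^ 2 + (a + c) ^ 2 - (b + c) ^ 2) / (2 * (a + b) * (a + c)))

/-- `theta i u` is the inner angle at vertex `i` of the triangle formed by three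
mutually externally tangent circles of radii `e^(u 0), e^(u 1), e^(u 2)`. -/
noncomputable def theta (i : Fin 3) (u : Fin 3 → ℝ) : ℝ :=
  ang (Real.exp (u i)) (Real.exp (u (i + 1))) (Real.exp (u (i + 2)))

lemma ang_symm (a b c : ℝ) : ang a b c = ang a c b := by
  unfold ang; ring_nf

lemma ang_hasDerivAt (a c : ℝ) (ha : 0 < a) (hc : 0 < c) (t : ℝ) :
    HasDerivAt (fun s => ang a (Real.exp s) c)
      (a * Real.exp t * c /
        ((a + Real.exp t) * Real.sqrt (a * Real.exp t * c * (a + Real.exp t + c)))) t := by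
  set b := Real.exp t with hbdef
  have hb : 0 < b := Real.exp_pos t
  set g : ℝ → ℝ := fun x => ((a + x) ^ 2 + (a + c) ^ 2 - (x + c) ^ 2) / (2 * (a + x) * (a + c))
    with hgdef
  have hab : (0:ℝ) < a + b := by positivity
  have hac : (0:ℝ) < a + c := by positivity
  have hden : 2 * (a + b) * (a + c) ≠ 0 := by positivity
  -- derivative of g at b
  have hA : HasDerivAt (fun x : ℝ => a + x) 1 b := (hasDerivAt_id b).const_add a
  have hC : HasDerivAt (fun x : ℝ => x + c) 1 b := (hasDerivAt_id b).add_const c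
  have hN : HasDerivAt (fun x : ℝ => (a + x) ^ 2 + (a + c) ^ 2 - (x + c) ^ 2)
      ((2:ℕ) * (a + b) ^ 1 * 1 - (2:ℕ) * (b + c) ^ 1 * 1) b :=
    ((hA.pow 2).add_const ((a + c) ^ 2)).sub (hC.pow 2)
  have hD : HasDerivAt (fun x : ℝ => 2 * (a + x) * (a + c)) (2 * 1 * (a + c)) b :=
    (hA.const_mul 2).mul_const (a + c)
  have hg : HasDerivAt g
      ((((2:ℕ) * (a + b) ^ 1 * 1 - (2:ℕ) * (b + c) ^ 1 * 1) * (2 * (a + b) * (a + c)) -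
        ((a + b) ^ 2 + (a + c) ^ 2 - (b + c) ^ 2) * (2 * 1 * (a + c))) /
        (2 * (a + b) * (a + c)) ^ 2) b := hN.div hD hden
  -- value of g at b
  have hgb1 : g b + 1 = 2 * a * (a + b + c) / ((a + b) * (a + c)) := by
    simp only [hgdef]; field_simp; ring
  have hgb2 : 1 - g b = 2 * b * c / ((a + b) * (a + c)) := by
    simp only [hgdef]; field_simp; ring
  have hne1 : g b ≠ -1 := by
    intro h
    have : (0:ℝ) < 2 * a * (a + b + c) / ((a + b) * (a + c)) := by positivity
    rw [← hgb1, h] at this; norm_num at this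
  have hne2 : g b ≠ 1 := by
    intro h
    have : (0:ℝ) < 2 * b * c / ((a + b) * (a + c)) := by positivity
    rw [← hgb2, h] at this; norm_num at this
  -- compose
  have harc := (Real.hasDerivAt_arccos hne1 hne2).comp b hg
  have hcomp := harc.comp t (Real.hasDerivAt_exp t)
  rw [← hbdef] at hcomp
  have hXpos : (0:ℝ) < a * b * c * (a + b + c) := by positivity
  have hsq : Real.sqrt (1 - g b ^ 2)
      = 2 * Real.sqrt (a * b * c * (a + b + c)) / ((a + b) * (a + c)) := by
    have h1m : 1 - g b ^ 2 = (2 * Real.sqrt (a * b * c * (a + b + c)) / ((a + b) * (a + c))) ^ 2 := by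
      have : 1 - g b ^ 2 = (1 - g b) * (g b + 1) := by ring
      rw [this, hgb1, hgb2, div_pow, mul_pow, mul_pow, Real.sq_sqrt hXpos.le]
      field_simp
    rw [h1m, Real.sqrt_sq (by positivity)]
  have heq : -(1 / Real.sqrt (1 - g b ^ 2)) *
      ((((2:ℕ) * (a + b) ^ 1 * 1 - (2:ℕ) * (b + c) ^ 1 * 1) * (2 * (a + b) * (a + c)) -
        ((a + b) ^ 2 + (a + c) ^ 2 - (b + c) ^ 2) * (2 * 1 * (a + c))) /
        (2 * (a + b) * (a + c)) ^ 2) * b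
      = a * b * c / ((a + b) * Real.sqrt (a * b * c * (a + b + c))) := by
    rw [hsq]
    have hs : Real.sqrt (a * b * c * (a + b + c)) > 0 := Real.sqrt_pos.mpr hXpos
    have hsq2 : Real.sqrt (a * b * c * (a + b + c)) ^ 2 = a * b * c * (a + b + c) :=
      Real.sq_sqrt hXpos.le
    field_simp
    push_cast
    ring
  have : (fun s => ang a (Real.exp s) c) = fun s => Real.arccos (g (Real.exp s)) := by
    funext s; simp [ang, hgdef]
  rw [this]
  exact heq ▸ hcomp

lemma key (x y z : ℝ) :
    deriv (fun t => ang (Real.exp x) (Real.exp t) (Real.exp z)) y =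
      deriv (fun t => ang (Real.exp y) (Real.exp t) (Real.exp z)) x := by
  rw [(ang_hasDerivAt _ _ (Real.exp_pos x) (Real.exp_pos z) y).deriv,
      (ang_hasDerivAt _ _ (Real.exp_pos y) (Real.exp_pos z) x).deriv]
  ring_nf

theorem stmt_6 (u : Fin 3 → ℝ) (i j : Fin 3) (hij : i ≠ j) :
    deriv (fun t => theta i (Function.update u j t)) (u j) =
      deriv (fun t => theta j (Function.update u i t)) (u i) := by
  have case01 : ∀ v : Fin 3 → ℝ,
      deriv (fun t => theta 0 (Function.update v 1 t)) (v 1) =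
        deriv (fun t => theta 1 (Function.update v 0 t)) (v 0) := by
    intro v
    have L : (fun t => theta 0 (Function.update v 1 t)) =
        fun t => ang (Real.exp (v 0)) (Real.exp t) (Real.exp (v 2)) := by
      funext t; simp [theta, Function.update]
    have R : (fun t => theta 1 (Function.update v 0 t)) =
        fun t => ang (Real.exp (v 1)) (Real.exp t) (Real.exp (v 2)) := by
      funext t; simp [theta, Function.update]; rw [ang_symm]
    rw [L, R]; exact key (v 0) (v 1) (v 2)
  have case02 : ∀ v : Fin 3 → ℝ,
      deriv (fun t => theta 0 (Function.update v 2 t)) (v 2) =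
        deriv (fun t => theta 2 (Function.update v 0 t)) (v 0) := by
    intro v
    have L : (fun t => theta 0 (Function.update v 2 t)) =
        fun t => ang (Real.exp (v 0)) (Real.exp t) (Real.exp (v 1)) := by
      funext t; simp [theta, Function.update]; rw [ang_symm]
    have R : (fun t => theta 2 (Function.update v 0 t)) =
        fun t => ang (Real.exp (v 2)) (Real.exp t) (Real.exp (v 1)) := by
      funext t; simp [theta, Function.update]
    rw [L, R]; exact key (v 0) (v 2) (v 1)
  have case12 : ∀ v : Fin 3 → ℝ,
      deriv (fun t => theta 1 (Function.update v 2 t)) (v 2) =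
        deriv (fun t => theta 2 (Function.update v 1 t)) (v 1) := by
    intro v
    have L : (fun t => theta 1 (Function.update v 2 t)) =
        fun t => ang (Real.exp (v 1)) (Real.exp t) (Real.exp (v 0)) := by
      funext t; simp [theta, Function.update]
    have R : (fun t => theta 2 (Function.update v 1 t)) =
        fun t => ang (Real.exp (v 2)) (Real.exp t) (Real.exp (v 0)) := by
      funext t; simp [theta, Function.update]; rw [ang_symm]
    rw [L, R]; exact key (v 1) (v 2) (v 0)
  fin_cases i <;> fin_cases j <;> simp_all <;>
    first
      | exact case01 u
      | exact case02 u
      | exact case12 u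
      | exact (case01 u).symm
      | exact (case02 u).symm
      | exact (case12 u).symm
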